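/- Let M be the symmetric N×N tridiagonal matrix with off-diagonal entries −1, first diagonal entry a₁/m + 1, last diagonal entry −a₂/m + 1, and interior diagonal entries 2 (the case V'' = 0 of the discrete operator A_N). Then det M = a₁/m − a₂/m − (a₁a₂/m²)(N−1). -/

import Mathlib

private def triA (n : ℕ) (α β : ℝ) : Matrix (Fin (n+2)) (Fin (n+2)) ℝ :=
  Matrix.of fun j k =>
    if (j : ℕ) + 1 = (k : ℕ) ∨ (k : ℕ) + 1 = (j : ℕ) then -1
    else if j = k then (if (j : ℕ) = 0 then α else if (j : ℕ) = n + 1 then β else 2) else 0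

private lemma triA_shift (n : ℕ) (α β : ℝ) :
    (triA (n+1) α β).submatrix Fin.succ Fin.succ = triA n 2 β := by
  ext i k
  simp only [triA, Matrix.submatrix_apply, Matrix.of_apply, Fin.val_succ, Fin.succ_inj]
  have h1 : (i : ℕ) + 1 + 1 = (k : ℕ) + 1 ↔ (i : ℕ) + 1 = (k : ℕ) := by omega
  have h2 : (k : ℕ) + 1 + 1 = (i : ℕ) + 1 ↔ (k : ℕ) + 1 = (i : ℕ) := by omega
  have h3 : ¬ ((i : ℕ) + 1 = 0) := by omega
  have h4 : (i : ℕ) + 1 = n + 1 + 1 ↔ (i : ℕ) = n + 1 := by omega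
  simp only [h1, h2, h3, if_false, h4]
  rcases eq_or_ne (i : ℕ) 0 with h | h
  · have h5 : (i : ℕ) ≠ n + 1 := by omega
    simp [h, h5]
  · simp [h]

private lemma triA_minor1 (n : ℕ) (α β : ℝ) :
    ((triA (n+2) α β).submatrix Fin.succ ((1 : Fin (n+4)).succAbove)).det
      = -(triA n 2 β).det := by
  rw [Matrix.det_succ_column_zero, Fin.sum_univ_succ]
  have hc : (1 : Fin (n+4)).succAbove ∘ Fin.succ = Fin.succ ∘ Fin.succ := by
    funext k
    ext
    simp [Fin.succAbove, Fin.lt_def]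
  have h00 : (triA (n+2) α β).submatrix Fin.succ ((1 : Fin (n+4)).succAbove) 0 0 = -1 := by
    have h0 : (1 : Fin (n+4)).succAbove 0 = 0 := by
      ext; simp [Fin.succAbove, Fin.lt_def]
    simp [h0, triA]
  have htail : ∀ i : Fin (n+2),
      (triA (n+2) α β).submatrix Fin.succ ((1 : Fin (n+4)).succAbove) i.succ 0 = 0 := by
    intro i
    have h0 : (1 : Fin (n+4)).succAbove 0 = 0 := by
      ext; simp [Fin.succAbove, Fin.lt_def]
    have : (i.succ.succ : Fin (n+4)) ≠ 0 := by
      intro h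
      have := congrArg Fin.val h
      simp at this
    simp [h0, triA, this, Fin.ext_iff, -Fin.val_eq_zero_iff]
  have hsub : ((triA (n+2) α β).submatrix Fin.succ
      ((1 : Fin (n+4)).succAbove)).submatrix ((0 : Fin (n+3)).succAbove) Fin.succ
      = triA n 2 β := by
    rw [Fin.succAbove_zero, Matrix.submatrix_submatrix, hc,
      show (Fin.succ ∘ Fin.succ : Fin (n+2) → Fin (n+4)) = Fin.succ ∘ Fin.succ from rfl]
    have : (triA (n+2) α β).submatrix (Fin.succ ∘ Fin.succ) (Fin.succ ∘ Fin.succ)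
        = ((triA (n+2) α β).submatrix Fin.succ Fin.succ).submatrix Fin.succ Fin.succ := by
      rw [Matrix.submatrix_submatrix]
    rw [this, triA_shift, triA_shift]
  rw [h00, hsub]
  simp only [Fin.val_succ, Fin.val_zero, pow_zero, one_mul]
  rw [Finset.sum_eq_zero]
  · ring
  · intro i _
    rw [htail]
    ring

private lemma triA_rec (n : ℕ) (α β : ℝ) :
    (triA (n+2) α β).det = α * (triA (n+1) 2 β).det - (triA n 2 β).det := by
  rw [Matrix.det_succ_row_zero, Fin.sum_univ_succ, Fin.sum_univ_succ]
  have e00 : triA (n+2) α β 0 0 = α := by simp [triA]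
  have e01 : triA (n+2) α β 0 (0 : Fin (n+3)).succ = -1 := by
    simp [triA]
  have etail : ∀ j : Fin (n+2), triA (n+2) α β 0 j.succ.succ = 0 := by
    intro j
    have h1 : (0 : Fin (n+4)) ≠ j.succ.succ := by
      intro h
      have := congrArg Fin.val h
      simp at this
    simp [triA, Fin.ext_iff, -Fin.val_eq_zero_iff]
  have hm0 : (triA (n+2) α β).submatrix Fin.succ ((0 : Fin (n+4)).succAbove)
      = triA (n+1) 2 β := by
    rw [Fin.succAbove_zero, triA_shift]
  have h1 : ((0 : Fin (n+3)).succ : Fin (n+4)) = 1 := rfl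
  rw [e00, e01, hm0, h1, triA_minor1, Finset.sum_eq_zero]
  · simp; ring
  · intro j _
    rw [etail]
    ring

private lemma triA_det (n : ℕ) : ∀ α β : ℝ,
    (triA n α β).det = ((n : ℝ) + 1) * α * β - (n : ℝ) * (α + β) + ((n : ℝ) - 1) := by
  induction n using Nat.twoStepInduction with
  | zero =>
    intro α β
    rw [show (triA 0 α β).det = Matrix.det (triA 0 α β) from rfl, Matrix.det_fin_two]
    simp [triA]
    ring
  | one =>
    intro α β
    rw [Matrix.det_fin_three]
    simp [triA, Fin.ext_iff, -Fin.val_eq_zero_iff]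
    ring
  | more n ih ih1 =>
    intro α β
    rw [triA_rec, ih1 2 β, ih 2 β]
    push_cast
    ring

/-- Determinant of the free discrete Jacobi matrix with Robin boundary modifications:
off-diagonal `-1`, diagonal `(a₁/m + 1, 2, …, 2, -a₂/m + 1)`. -/
theorem free_discrete_det (N : ℕ) (hN : 2 ≤ N) (a₁ a₂ m : ℝ) (hm : m ≠ 0)
    (M : Matrix (Fin N) (Fin N) ℝ)
    (hM : M = Matrix.of fun (j k : Fin N) =>
      if (j : ℕ) + 1 = (k : ℕ) ∨ (k : ℕ) + 1 = (j : ℕ) then -1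
      else if j = k then
        (if (j : ℕ) = 0 then a₁/m + 1 else if (j : ℕ) = N - 1 then -a₂/m + 1 else 2)
      else 0) :
    M.det = a₁/m - a₂/m - (a₁ * a₂ / m ^ 2) * ((N : ℝ) - 1) := by
  obtain ⟨n, rfl⟩ : ∃ n, N = n + 2 := ⟨N - 2, by omega⟩
  have hMA : M = triA n (a₁/m + 1) (-a₂/m + 1) := by
    rw [hM]
    ext j k
    simp only [triA, Matrix.of_apply]
    have : n + 2 - 1 = n + 1 := by omega
    rw [this]
  rw [hMA, triA_det]
  push_cast
  field_simp
  ring
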